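/- Let M₁, M₂ be ITL^e models and Z_n ⊆ ⋯ ⊆ Z_0 a bounded U-bisimulation. Then for all m ≤ n, if w₁ Z_m w₂, then for every formula φ built from atoms, ⊥, ∧, ∨, →, ◯, U of length |φ| ≤ m: M₁, w₁ ⊨ φ iff M₂, w₂ ⊨ φ. -/
import Mathlib


inductive TForm : Type where
  | atom : ℕ → TForm
  | bot : TForm
  | and : TForm → TForm → TForm
  | or : TForm → TForm → TForm
  | imp : TForm → TForm → TForm
  | next : TForm → TForm
  | dia : TForm → TForm
  | box : TForm → TForm
  | untl : TForm → TForm → TForm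
  | rels : TForm → TForm → TForm

/-- Intuitionistic temporal satisfaction over a dynamic poset `(W, ≤, S)`
with valuation `V`. -/
def sat {W : Type} [PartialOrder W] (S : W → W) (V : W → ℕ → Prop) : TForm → W → Prop
  | .atom p, w => V w p
  | .bot, _ => False
  | .and φ ψ, w => sat S V φ w ∧ sat S V ψ w
  | .or φ ψ, w => sat S V φ w ∨ sat S V ψ w
  | .imp φ ψ, w => ∀ v, w ≤ v → sat S V φ v → sat S V ψ v
  | .next φ, w => sat S V φ (S w)
  | .dia φ, w => ∃ k, sat S V φ (S^[k] w)
  | .box φ, w => ∀ k, sat S V φ (S^[k] w)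
  | .untl φ ψ, w => ∃ k, sat S V ψ (S^[k] w) ∧ ∀ i < k, sat S V φ (S^[i] w)
  | .rels φ ψ, w => ∀ k, sat S V ψ (S^[k] w) ∨ ∃ i < k, sat S V φ (S^[i] w)

/-- The length (number of connectives) of a formula. -/
def len : TForm → ℕ
  | .atom _ => 0
  | .bot => 0
  | .and φ ψ => 1 + len φ + len ψ
  | .or φ ψ => 1 + len φ + len ψ
  | .imp φ ψ => 1 + len φ + len ψ
  | .next φ => 1 + len φ
  | .dia φ => 1 + len φ
  | .box φ => 1 + len φ
  | .untl φ ψ => 1 + len φ + len ψ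
  | .rels φ ψ => 1 + len φ + len ψ

/-- Formulas using only the connectives ⊥, ∧, ∨, →, and {next, untl}. -/
def LangU : TForm → Prop
  | .atom _ => True
  | .bot => True
  | .and φ ψ => LangU φ ∧ LangU ψ
  | .or φ ψ => LangU φ ∧ LangU ψ
  | .imp φ ψ => LangU φ ∧ LangU ψ
  | .next φ => LangU φ
  | .dia _ => False
  | .box _ => False
  | .untl φ ψ => LangU φ ∧ LangU ψ
  | .rels _ _ => False


theorem iter_mono {W : Type} [PartialOrder W] (S : W → W)
    (hS : ∀ w v : W, w ≤ v → S w ≤ S v) :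
    ∀ k (w v : W), w ≤ v → S^[k] w ≤ S^[k] v := by
  intro k
  induction k with
  | zero => intro w v h; simpa using h
  | succ k ih =>
      intro w v h
      rw [Function.iterate_succ_apply, Function.iterate_succ_apply]
      exact ih _ _ (hS _ _ h)

theorem sat_mono {W : Type} [PartialOrder W] (S : W → W) (V : W → ℕ → Prop)
    (hS : ∀ w v : W, w ≤ v → S w ≤ S v)
    (hV : ∀ w v : W, w ≤ v → ∀ p, V w p → V v p) :
    ∀ φ (w v : W), w ≤ v → sat S V φ w → sat S V φ v := by
  intro φ
  induction φ with
  | atom p => intro w v h hw; exact hV w v h p hw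
  | bot => intro w v h hw; exact hw
  | and φ ψ ihφ ihψ => intro w v h hw; exact ⟨ihφ _ _ h hw.1, ihψ _ _ h hw.2⟩
  | or φ ψ ihφ ihψ => intro w v h hw; exact hw.imp (ihφ _ _ h) (ihψ _ _ h)
  | imp φ ψ ihφ ihψ => intro w v h hw u hu hφ; exact hw u (le_trans h hu) hφ
  | next φ ih => intro w v h hw; exact ih _ _ (hS _ _ h) hw
  | dia φ ih =>
      intro w v h hw
      obtain ⟨k, hk⟩ := hw
      exact ⟨k, ih _ _ (iter_mono S hS k _ _ h) hk⟩
  | box φ ih => intro w v h hw k; exact ih _ _ (iter_mono S hS k _ _ h) (hw k)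
  | untl φ ψ ihφ ihψ =>
      intro w v h hw
      obtain ⟨k, hk, hi⟩ := hw
      exact ⟨k, ihψ _ _ (iter_mono S hS k _ _ h) hk,
        fun i hik => ihφ _ _ (iter_mono S hS i _ _ h) (hi i hik)⟩
  | rels φ ψ ihφ ihψ =>
      intro w v h hw k
      rcases hw k with h1 | ⟨i, hik, hi⟩
      · exact Or.inl (ihψ _ _ (iter_mono S hS k _ _ h) h1)
      · exact Or.inr ⟨i, hik, ihφ _ _ (iter_mono S hS i _ _ h) hi⟩

/-- Bounded U-bisimulations preserve U-formulas of bounded length. -/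
theorem until_bisim_invariance {W₁ W₂ : Type} [PartialOrder W₁] [PartialOrder W₂]
    (S₁ : W₁ → W₁) (V₁ : W₁ → ℕ → Prop) (S₂ : W₂ → W₂) (V₂ : W₂ → ℕ → Prop)
    (hS₁ : ∀ w v : W₁, w ≤ v → S₁ w ≤ S₁ v)
    (hV₁ : ∀ w v : W₁, w ≤ v → ∀ p, V₁ w p → V₁ v p)
    (hS₂ : ∀ w v : W₂, w ≤ v → S₂ w ≤ S₂ v)
    (hV₂ : ∀ w v : W₂, w ≤ v → ∀ p, V₂ w p → V₂ v p)
    (n : ℕ) (hn : 0 < n) (Z : ℕ → W₁ → W₂ → Prop)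
    (hchain : ∀ i < n, ∀ w₁ w₂, Z (i+1) w₁ w₂ → Z i w₁ w₂)
    (hatoms : ∀ i < n, ∀ w₁ w₂, Z i w₁ w₂ → ∀ p, V₁ w₁ p ↔ V₂ w₂ p)
    (hforth_imp : ∀ i < n, ∀ w₁ w₂, Z (i+1) w₁ w₂ →
      ∀ v₁, w₁ ≤ v₁ → ∃ v₂, w₂ ≤ v₂ ∧ Z i v₁ v₂)
    (hback_imp : ∀ i < n, ∀ w₁ w₂, Z (i+1) w₁ w₂ →
      ∀ v₂, w₂ ≤ v₂ → ∃ v₁, w₁ ≤ v₁ ∧ Z i v₁ v₂)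
    (hnext : ∀ i < n, ∀ w₁ w₂, Z (i+1) w₁ w₂ → Z i (S₁ w₁) (S₂ w₂))
    (hforth_u : ∀ i < n, ∀ w₁ w₂, Z (i+1) w₁ w₂ → ∀ k₁ : ℕ, ∃ k₂ : ℕ, ∃ v₁ v₂,
      v₂ ≤ S₂^[k₂] w₂ ∧ S₁^[k₁] w₁ ≤ v₁ ∧ Z i v₁ v₂ ∧
      ∀ j₂ < k₂, ∃ j₁ < k₁, ∃ u₁ u₂,
        S₁^[j₁] w₁ ≤ u₁ ∧ u₂ ≤ S₂^[j₂] w₂ ∧ Z i u₁ u₂)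
    (hback_u : ∀ i < n, ∀ w₁ w₂, Z (i+1) w₁ w₂ → ∀ k₂ : ℕ, ∃ k₁ : ℕ, ∃ v₁ v₂,
      v₁ ≤ S₁^[k₁] w₁ ∧ S₂^[k₂] w₂ ≤ v₂ ∧ Z i v₁ v₂ ∧
      ∀ j₁ < k₁, ∃ j₂ < k₂, ∃ u₁ u₂,
        S₂^[j₂] w₂ ≤ u₂ ∧ u₁ ≤ S₁^[j₁] w₁ ∧ Z i u₁ u₂) :
    ∀ i ≤ n, ∀ w₁ w₂, Z i w₁ w₂ → ∀ φ, LangU φ → len φ ≤ i →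
      (sat S₁ V₁ φ w₁ ↔ sat S₂ V₂ φ w₂) := by
  
  intro i hi w₁ w₂ hZ φ hL hlen
  induction φ generalizing i w₁ w₂ with
  | atom p =>
      rcases lt_or_eq_of_le hi with h | heq
      · exact hatoms i h w₁ w₂ hZ p
      · obtain ⟨m, hm⟩ : ∃ m, i = m + 1 := ⟨i - 1, by omega⟩
        have hmn : m < n := by omega
        rw [hm] at hZ
        exact hatoms m hmn w₁ w₂ (hchain m hmn w₁ w₂ hZ) p
  | bot => exact Iff.rfl
  | and φ ψ ihφ ihψ =>
      simp only [LangU] at hL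
      simp only [len] at hlen
      obtain ⟨j, rfl⟩ : ∃ j, i = j + 1 := ⟨i - 1, by omega⟩
      have hj : j < n := by omega
      have hZ' := hchain j hj w₁ w₂ hZ
      exact and_congr (ihφ j (by omega) w₁ w₂ hZ' hL.1 (by omega))
        (ihψ j (by omega) w₁ w₂ hZ' hL.2 (by omega))
  | or φ ψ ihφ ihψ =>
      simp only [LangU] at hL
      simp only [len] at hlen
      obtain ⟨j, rfl⟩ : ∃ j, i = j + 1 := ⟨i - 1, by omega⟩
      have hj : j < n := by omega
      have hZ' := hchain j hj w₁ w₂ hZ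
      exact or_congr (ihφ j (by omega) w₁ w₂ hZ' hL.1 (by omega))
        (ihψ j (by omega) w₁ w₂ hZ' hL.2 (by omega))
  | imp φ ψ ihφ ihψ =>
      simp only [LangU] at hL
      simp only [len] at hlen
      obtain ⟨j, rfl⟩ : ∃ j, i = j + 1 := ⟨i - 1, by omega⟩
      have hj : j < n := by omega
      constructor
      · intro h1 v₂ hv₂ hφ₂
        obtain ⟨v₁, hv₁, hZv⟩ := hback_imp j hj w₁ w₂ hZ v₂ hv₂
        exact (ihψ j (by omega) v₁ v₂ hZv hL.2 (by omega)).mp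
          (h1 v₁ hv₁ ((ihφ j (by omega) v₁ v₂ hZv hL.1 (by omega)).mpr hφ₂))
      · intro h2 v₁ hv₁ hφ₁
        obtain ⟨v₂, hv₂, hZv⟩ := hforth_imp j hj w₁ w₂ hZ v₁ hv₁
        exact (ihψ j (by omega) v₁ v₂ hZv hL.2 (by omega)).mpr
          (h2 v₂ hv₂ ((ihφ j (by omega) v₁ v₂ hZv hL.1 (by omega)).mp hφ₁))
  | next φ ih =>
      simp only [LangU] at hL
      simp only [len] at hlen
      obtain ⟨j, rfl⟩ : ∃ j, i = j + 1 := ⟨i - 1, by omega⟩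
      have hj : j < n := by omega
      exact ih j (by omega) (S₁ w₁) (S₂ w₂) (hnext j hj w₁ w₂ hZ) hL (by omega)
  | dia φ ih => simp only [LangU] at hL
  | box φ ih => simp only [LangU] at hL
  | untl φ ψ ihφ ihψ =>
      simp only [LangU] at hL
      simp only [len] at hlen
      obtain ⟨j, rfl⟩ : ∃ j, i = j + 1 := ⟨i - 1, by omega⟩
      have hj : j < n := by omega
      constructor
      · rintro ⟨k₁, hψ₁, hφ₁⟩
        obtain ⟨k₂, v₁, v₂, hv₂, hv₁, hZv, hside⟩ := hforth_u j hj w₁ w₂ hZ k₁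
        refine ⟨k₂, ?_, ?_⟩
        · exact sat_mono S₂ V₂ hS₂ hV₂ ψ v₂ _ hv₂
            ((ihψ j (by omega) v₁ v₂ hZv hL.2 (by omega)).mp
              (sat_mono S₁ V₁ hS₁ hV₁ ψ _ v₁ hv₁ hψ₁))
        · intro j₂ hj₂
          obtain ⟨j₁, hj₁, u₁, u₂, hu₁, hu₂, hZu⟩ := hside j₂ hj₂
          exact sat_mono S₂ V₂ hS₂ hV₂ φ u₂ _ hu₂
            ((ihφ j (by omega) u₁ u₂ hZu hL.1 (by omega)).mp
              (sat_mono S₁ V₁ hS₁ hV₁ φ _ u₁ hu₁ (hφ₁ j₁ hj₁)))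
      · rintro ⟨k₂, hψ₂, hφ₂⟩
        obtain ⟨k₁, v₁, v₂, hv₁, hv₂, hZv, hside⟩ := hback_u j hj w₁ w₂ hZ k₂
        refine ⟨k₁, ?_, ?_⟩
        · exact sat_mono S₁ V₁ hS₁ hV₁ ψ v₁ _ hv₁
            ((ihψ j (by omega) v₁ v₂ hZv hL.2 (by omega)).mpr
              (sat_mono S₂ V₂ hS₂ hV₂ ψ _ v₂ hv₂ hψ₂))
        · intro j₁ hj₁
          obtain ⟨j₂, hj₂, u₁, u₂, hu₂, hu₁, hZu⟩ := hside j₁ hj₁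
          exact sat_mono S₁ V₁ hS₁ hV₁ φ u₁ _ hu₁
            ((ihφ j (by omega) u₁ u₂ hZu hL.1 (by omega)).mpr
              (sat_mono S₂ V₂ hS₂ hV₂ φ _ u₂ hu₂ (hφ₂ j₂ hj₂)))
  | rels φ ψ ihφ ihψ => simp only [LangU] at hL
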